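/- Let X, Y be independent real random variables, and let N, N' be independent standard Gaussian random variables. Then for real numbers σ, τ not both zero, d_KS((σX + τY)/√(σ²+τ²), N) ≤ d_KS(X, N) + d_KS(Y, N). -/

import Mathlib

open MeasureTheory ProbabilityTheory

/-- The Kolmogorov–Smirnov distance between a random variable and a standard Gaussian. -/
noncomputable def dKSN {Ω : Type*} [MeasureSpace Ω] (A : Ω → ℝ) : ℝ :=
  ⨆ s : ℝ, |(ℙ {ω | A ω ≤ s}).toReal - ((gaussianReal 0 1) (Set.Iic s)).toReal|

open Real Set
open scoped NNReal ENNReal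

lemma gauss_pdf_conv (a b : ℝ≥0) (ha : a ≠ 0) (hb : b ≠ 0) (u : ℝ) :
    ∫ x : ℝ, gaussianPDFReal 0 a x * gaussianPDFReal 0 b (u - x)
      = gaussianPDFReal 0 (a + b) u := by
  have ha' : (0:ℝ) < a := lt_of_le_of_ne a.coe_nonneg (by exact_mod_cast (Ne.symm ha))
  have hb' : (0:ℝ) < b := lt_of_le_of_ne b.coe_nonneg (by exact_mod_cast (Ne.symm hb))
  have hab : (0:ℝ) < (a:ℝ) + b := by linarith
  have hpi : (0:ℝ) < π := Real.pi_pos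
  set A : ℝ := ((a:ℝ) + b) / (2 * a * b) with hA
  have hA' : 0 < A := by positivity
  set m : ℝ := a * u / ((a:ℝ) + b) with hm
  set C : ℝ := (√(2*π*a))⁻¹ * (√(2*π*b))⁻¹ * rexp (-u^2 / (2*((a:ℝ)+b))) with hC
  have key : ∀ x : ℝ, gaussianPDFReal 0 a x * gaussianPDFReal 0 b (u - x)
      = C * rexp (-A * (x - m)^2) := by
    intro x
    have hexp : rexp (-x ^ 2 / (2 * (a:ℝ))) * rexp (-(u - x)^2 / (2*(b:ℝ)))
        = rexp (-u^2/(2*((a:ℝ)+b))) * rexp (-A*(x-m)^2) := by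
      rw [← Real.exp_add, ← Real.exp_add]
      congr 1
      rw [hA, hm]
      field_simp
      ring
    simp only [gaussianPDFReal, sub_zero, hC]
    calc (√(2*π*(a:ℝ)))⁻¹ * rexp (-x ^ 2 / (2 * (a:ℝ)))
          * ((√(2*π*(b:ℝ)))⁻¹ * rexp (-(u - x)^2 / (2*(b:ℝ))))
        = (√(2*π*(a:ℝ)))⁻¹ * (√(2*π*(b:ℝ)))⁻¹
          * (rexp (-x ^ 2 / (2 * (a:ℝ))) * rexp (-(u - x)^2 / (2*(b:ℝ)))) := by ring
      _ = (√(2*π*(a:ℝ)))⁻¹ * (√(2*π*(b:ℝ)))⁻¹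
          * (rexp (-u^2/(2*((a:ℝ)+b))) * rexp (-A*(x-m)^2)) := by rw [hexp]
      _ = (√(2*π*(a:ℝ)))⁻¹ * (√(2*π*(b:ℝ)))⁻¹ * rexp (-u^2/(2*((a:ℝ)+b)))
          * rexp (-A*(x-m)^2) := by ring
  calc ∫ x : ℝ, gaussianPDFReal 0 a x * gaussianPDFReal 0 b (u - x)
      = ∫ x : ℝ, C * rexp (-A * (x - m)^2) := by exact integral_congr_ae (ae_of_all _ key)
    _ = C * ∫ x : ℝ, rexp (-A * (x - m)^2) := integral_const_mul _ _
    _ = C * ∫ x : ℝ, rexp (-A * x^2) := by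
        rw [integral_sub_right_eq_self (fun x => rexp (-A * x^2)) m]
    _ = C * √(π / A) := by rw [integral_gaussian]
    _ = gaussianPDFReal 0 (a + b) u := by
        simp only [gaussianPDFReal, sub_zero, NNReal.coe_add, hC]
        rw [mul_comm (_ * _) (rexp _), mul_assoc]
        rw [mul_comm]
        congr 1
        rw [← Real.sqrt_inv, ← Real.sqrt_inv, ← Real.sqrt_mul (by positivity),
          ← Real.sqrt_mul (by positivity), ← Real.sqrt_inv]
        congr 1
        rw [hA]
        field_simp

lemma gaussianPDFReal_le (v : ℝ≥0) (y : ℝ) :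
    gaussianPDFReal 0 v y ≤ (√(2*π*v))⁻¹ := by
  rw [gaussianPDFReal]
  have h1 : rexp (-(y - 0)^2 / (2*(v:ℝ))) ≤ 1 := by
    rw [Real.exp_le_one_iff]
    exact div_nonpos_of_nonpos_of_nonneg (neg_nonpos.2 (sq_nonneg _)) (by positivity)
  calc (√(2*π*(v:ℝ)))⁻¹ * rexp (-(y - 0)^2 / (2*(v:ℝ)))
      ≤ (√(2*π*(v:ℝ)))⁻¹ * 1 := by
        apply mul_le_mul_of_nonneg_left h1 (by positivity)
    _ = (√(2*π*(v:ℝ)))⁻¹ := mul_one _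

lemma measurable_gauss_cdf (v : ℝ≥0) :
    Measurable (fun r : ℝ => gaussianReal 0 v (Iic r)) := by
  have : Monotone (fun r : ℝ => gaussianReal 0 v (Iic r)) :=
    fun r s hrs => measure_mono (Iic_subset_Iic.2 hrs)
  exact this.measurable

lemma gauss_conv_Iic (a b : ℝ≥0) (ha : a ≠ 0) (hb : b ≠ 0) (t : ℝ) :
    ∫⁻ x, gaussianReal 0 b (Iic (t - x)) ∂(gaussianReal 0 a)
      = gaussianReal 0 (a + b) (Iic t) := by
  have hmap : ∀ x : ℝ, Measure.map (· - x) (volume : Measure ℝ) = volume := by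
    intro x
    simpa [sub_eq_add_neg] using map_add_right_eq_self (volume : Measure ℝ) (-x)
  have hinner : ∀ x : ℝ, gaussianReal 0 b (Iic (t - x))
      = ∫⁻ u in Iic t, gaussianPDF 0 b (u - x) ∂volume := by
    intro x
    rw [gaussianReal_apply 0 hb]
    have := setLIntegral_map (μ := (volume : Measure ℝ)) (s := Iic (t - x))
      measurableSet_Iic (measurable_gaussianPDF 0 b) (measurable_sub_const x)
    rw [hmap x] at this
    rw [this]
    congr 1
    ext u
    simp [sub_le_sub_iff_right]
  calc ∫⁻ x, gaussianReal 0 b (Iic (t - x)) ∂(gaussianReal 0 a)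
      = ∫⁻ x, gaussianPDF 0 a x * gaussianReal 0 b (Iic (t - x)) ∂volume := by
        have hmeas : Measurable (fun x : ℝ => gaussianReal 0 b (Iic (t - x))) :=
          (measurable_gauss_cdf b).comp (measurable_const.sub measurable_id)
        rw [gaussianReal_of_var_ne_zero 0 ha,
          lintegral_withDensity_eq_lintegral_mul _ (measurable_gaussianPDF 0 a) hmeas]
        rfl
    _ = ∫⁻ x, ∫⁻ u in Iic t, gaussianPDF 0 a x * gaussianPDF 0 b (u - x) ∂volume ∂volume := by
        congr 1
        ext x
        have hmeas : Measurable (fun u : ℝ => gaussianPDF 0 b (u - x)) :=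
          (measurable_gaussianPDF 0 b).comp (measurable_sub_const x)
        rw [hinner x, ← lintegral_const_mul _ hmeas]
    _ = ∫⁻ u in Iic t, ∫⁻ x, gaussianPDF 0 a x * gaussianPDF 0 b (u - x) ∂volume ∂volume := by
        apply lintegral_lintegral_swap
        exact (((measurable_gaussianPDF 0 a).comp measurable_fst).mul
          ((measurable_gaussianPDF 0 b).comp (measurable_snd.sub measurable_fst))).aemeasurable
    _ = ∫⁻ u in Iic t, gaussianPDF 0 (a + b) u ∂volume := by
        apply setLIntegral_congr_fun measurableSet_Iic
        intro u _
        have hint : Integrable (fun x : ℝ => gaussianPDFReal 0 a x * gaussianPDFReal 0 b (u - x)) := by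
          refine Integrable.congr (Integrable.bdd_mul (integrable_gaussianPDFReal 0 a)
            ?_ (c := (√(2*π*(b:ℝ)))⁻¹) (ae_of_all _ fun x => ?_)) (ae_of_all _ fun x => mul_comm _ _)
          · exact ((measurable_gaussianPDFReal 0 b).comp (measurable_const.sub measurable_id)).aestronglyMeasurable
          · rw [Real.norm_eq_abs, abs_of_nonneg (gaussianPDFReal_nonneg 0 b _)]
            exact gaussianPDFReal_le b _
        calc ∫⁻ x, gaussianPDF 0 a x * gaussianPDF 0 b (u - x) ∂volume
            = ∫⁻ x, ENNReal.ofReal (gaussianPDFReal 0 a x * gaussianPDFReal 0 b (u - x)) ∂volume := by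
              congr 1
              ext x
              rw [gaussianPDF_def, ENNReal.ofReal_mul (gaussianPDFReal_nonneg 0 a x)]
              rfl
          _ = ENNReal.ofReal (∫ x, gaussianPDFReal 0 a x * gaussianPDFReal 0 b (u - x)) := by
              rw [← ofReal_integral_eq_lintegral_ofReal hint (ae_of_all _ fun x =>
                mul_nonneg (gaussianPDFReal_nonneg 0 a x) (gaussianPDFReal_nonneg 0 b _))]
          _ = gaussianPDF 0 (a + b) u := by
              rw [gauss_pdf_conv a b ha hb u]; rfl
    _ = gaussianReal 0 (a + b) (Iic t) := by
        rw [gaussianReal_apply 0 (by simp [ha]) (Iic t)]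

noncomputable def Kd (μ : Measure ℝ) : ℝ :=
  ⨆ s : ℝ, |(μ (Iic s)).toReal - ((gaussianReal 0 1) (Iic s)).toReal|

lemma toReal_le_one (μ : Measure ℝ) [IsProbabilityMeasure μ] (s : Set ℝ) :
    (μ s).toReal ≤ 1 := by
  rw [show (1:ℝ) = (μ univ).toReal by simp]
  exact ENNReal.toReal_mono (measure_ne_top _ _) (measure_mono (subset_univ _))

lemma Kd_bdd (μ : Measure ℝ) [IsProbabilityMeasure μ] :
    BddAbove (range fun s : ℝ => |(μ (Iic s)).toReal - ((gaussianReal 0 1) (Iic s)).toReal|) := by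
  refine ⟨2, ?_⟩
  rintro x ⟨s, rfl⟩
  have h1 := toReal_le_one μ (Iic s)
  have h2 := toReal_le_one (gaussianReal 0 1) (Iic s)
  have h3 : 0 ≤ (μ (Iic s)).toReal := ENNReal.toReal_nonneg
  have h4 : 0 ≤ ((gaussianReal 0 1) (Iic s)).toReal := ENNReal.toReal_nonneg
  rw [abs_le]; constructor <;> linarith

lemma abs_le_Kd (μ : Measure ℝ) [IsProbabilityMeasure μ] (s : ℝ) :
    |(μ (Iic s)).toReal - ((gaussianReal 0 1) (Iic s)).toReal| ≤ Kd μ :=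
  le_ciSup (Kd_bdd μ) s

lemma Kd_nonneg (μ : Measure ℝ) [IsProbabilityMeasure μ] : 0 ≤ Kd μ :=
  Real.iSup_nonneg fun _ => abs_nonneg _

lemma gauss_singleton (x : ℝ) : (gaussianReal 0 1) {x} = 0 :=
  gaussianReal_absolutelyContinuous 0 one_ne_zero (Real.volume_singleton)

lemma gauss_Iio (v : ℝ) : (gaussianReal 0 1) (Iio v) = (gaussianReal 0 1) (Iic v) := by
  rw [← Iio_union_right, measure_union (by simp) (measurableSet_singleton v),
    gauss_singleton, add_zero]

lemma Iio_le_Kd (μ : Measure ℝ) [IsProbabilityMeasure μ] (v : ℝ) :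
    |(μ (Iio v)).toReal - ((gaussianReal 0 1) (Iic v)).toReal| ≤ Kd μ := by
  set s : ℕ → ℝ := fun n => v - 1 / (n + 1) with hs
  have hmono : Monotone fun n : ℕ => Iic (s n) := by
    intro i j hij
    apply Iic_subset_Iic.2
    have : (1:ℝ) / (j + 1) ≤ 1 / (i + 1) := by
      apply one_div_le_one_div_of_le (by positivity)
      exact_mod_cast Nat.add_le_add_right hij 1
    simp only [hs]; linarith
  have hunion : Iio v = ⋃ n : ℕ, Iic (s n) := by
    ext x
    simp only [mem_Iio, mem_iUnion, mem_Iic, hs]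
    constructor
    · intro hx
      obtain ⟨n, hn⟩ := exists_nat_one_div_lt (show (0:ℝ) < v - x by linarith)
      exact ⟨n, by linarith⟩
    · rintro ⟨n, hn⟩
      have : (0:ℝ) < 1 / (n + 1) := by positivity
      linarith
  have htendμ : Filter.Tendsto (fun n => μ (Iic (s n))) Filter.atTop (nhds (μ (Iio v))) := by
    rw [hunion]; exact tendsto_measure_iUnion_atTop hmono
  have htendγ : Filter.Tendsto (fun n => (gaussianReal 0 1) (Iic (s n))) Filter.atTop
      (nhds ((gaussianReal 0 1) (Iic v))) := by
    rw [← gauss_Iio, hunion]; exact tendsto_measure_iUnion_atTop hmono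
  have h1 : Filter.Tendsto (fun n => (μ (Iic (s n))).toReal) Filter.atTop
      (nhds ((μ (Iio v)).toReal)) := (ENNReal.tendsto_toReal (measure_ne_top _ _)).comp htendμ
  have h2 : Filter.Tendsto (fun n => ((gaussianReal 0 1) (Iic (s n))).toReal) Filter.atTop
      (nhds (((gaussianReal 0 1) (Iic v)).toReal)) :=
    (ENNReal.tendsto_toReal (measure_ne_top _ _)).comp htendγ
  have h3 : Filter.Tendsto
      (fun n => |(μ (Iic (s n))).toReal - ((gaussianReal 0 1) (Iic (s n))).toReal|)
      Filter.atTop (nhds (|(μ (Iio v)).toReal - ((gaussianReal 0 1) (Iic v)).toReal|)) :=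
    (h1.sub h2).abs
  exact le_of_tendsto h3 (Filter.Eventually.of_forall fun n => abs_le_Kd μ (s n))

lemma scaled_le_Kd (μ : Measure ℝ) [IsProbabilityMeasure μ] (σ : ℝ) (u : ℝ) :
    |(μ {x | σ * x ≤ u}).toReal - ((gaussianReal 0 1) {x | σ * x ≤ u}).toReal| ≤ Kd μ := by
  rcases lt_trichotomy σ 0 with hσ | hσ | hσ
  · have hset : {x : ℝ | σ * x ≤ u} = Ici (u / σ) := by
      ext x; simp only [mem_setOf_eq, mem_Ici]
      rw [div_le_iff_of_neg hσ, mul_comm]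
    rw [hset]
    have key : ∀ (ν : Measure ℝ) [IsProbabilityMeasure ν],
        (ν (Ici (u / σ))).toReal = 1 - (ν (Iio (u / σ))).toReal := by
      intro ν _
      rw [show Ici (u/σ) = (Iio (u/σ))ᶜ by simp, measure_compl measurableSet_Iio
        (measure_ne_top _ _), measure_univ,
        ENNReal.toReal_sub_of_le prob_le_one ENNReal.one_ne_top, ENNReal.toReal_one]
    rw [key μ, key (gaussianReal 0 1), gauss_Iio]
    have := Iio_le_Kd μ (u / σ)
    rw [abs_sub_comm] at this
    calc |1 - (μ (Iio (u/σ))).toReal - (1 - ((gaussianReal 0 1) (Iic (u/σ))).toReal)|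
        = |((gaussianReal 0 1) (Iic (u/σ))).toReal - (μ (Iio (u/σ))).toReal| := by ring_nf
      _ ≤ Kd μ := this
  · subst hσ
    rcases le_or_gt 0 u with hu | hu
    · have hset : {x : ℝ | 0 * x ≤ u} = univ := by ext x; simpa using hu
      rw [hset]; simpa using Kd_nonneg μ
    · have hset : {x : ℝ | 0 * x ≤ u} = ∅ := by
        ext x; simpa using not_le.2 hu
      rw [hset]; simpa using Kd_nonneg μ
  · have hset : {x : ℝ | σ * x ≤ u} = Iic (u / σ) := by
      ext x; simp only [mem_setOf_eq, mem_Iic]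
      rw [le_div_iff₀ hσ, mul_comm]
    rw [hset]
    exact abs_le_Kd μ (u / σ)

-- measurability of the half-plane set
lemma Smeas (σ τ t : ℝ) : MeasurableSet {p : ℝ × ℝ | σ * p.1 + τ * p.2 ≤ t} :=
  measurableSet_le (by fun_prop) measurable_const

lemma slice_meas (μ : Measure ℝ) [IsProbabilityMeasure μ] (σ : ℝ) :
    Measurable (fun u : ℝ => μ {x | σ * x ≤ u}) := by
  have hm : Monotone (fun u : ℝ => μ {x | σ * x ≤ u}) := by
    intro u v huv
    exact measure_mono (fun x hx => le_trans hx huv)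
  exact hm.measurable

/-- toReal of the prod measure of the half plane, as an integral over the second coordinate. -/
lemma prod_toReal_snd (α β : Measure ℝ) [IsProbabilityMeasure α] [IsProbabilityMeasure β]
    (σ τ t : ℝ) :
    ((α.prod β) {p : ℝ × ℝ | σ * p.1 + τ * p.2 ≤ t}).toReal
      = ∫ y, (α {x | σ * x ≤ t - τ * y}).toReal ∂β := by
  rw [Measure.prod_apply_symm (Smeas σ τ t)]
  have hset : ∀ y : ℝ, ((fun x => (x, y)) ⁻¹' {p : ℝ × ℝ | σ * p.1 + τ * p.2 ≤ t})
      = {x | σ * x ≤ t - τ * y} := by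
    intro y; ext x; simp only [mem_preimage, mem_setOf_eq]; constructor <;> intro h <;> linarith
  simp_rw [hset]
  rw [integral_toReal]
  · exact ((slice_meas α σ).comp (measurable_const.sub (measurable_id.const_mul τ))).aemeasurable
  · exact ae_of_all _ fun y => measure_lt_top _ _

lemma prod_toReal_fst (α β : Measure ℝ) [IsProbabilityMeasure α] [IsProbabilityMeasure β]
    (σ τ t : ℝ) :
    ((α.prod β) {p : ℝ × ℝ | σ * p.1 + τ * p.2 ≤ t}).toReal
      = ∫ x, (β {y | τ * y ≤ t - σ * x}).toReal ∂α := by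
  rw [Measure.prod_apply (Smeas σ τ t)]
  have hset : ∀ x : ℝ, (Prod.mk x ⁻¹' {p : ℝ × ℝ | σ * p.1 + τ * p.2 ≤ t})
      = {y | τ * y ≤ t - σ * x} := by
    intro x; ext y; simp only [mem_preimage, mem_setOf_eq]; constructor <;> intro h <;> linarith
  simp_rw [hset]
  rw [integral_toReal]
  · exact ((slice_meas β τ).comp (measurable_const.sub (measurable_id.const_mul σ))).aemeasurable
  · exact ae_of_all _ fun y => measure_lt_top _ _

lemma integral_compare (β : Measure ℝ) [IsProbabilityMeasure β] (F G : ℝ → ℝ)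
    (hF : Measurable F) (hG : Measurable G) (hF1 : ∀ y, |F y| ≤ 1) (hG1 : ∀ y, |G y| ≤ 1)
    (D : ℝ) (h : ∀ y, |F y - G y| ≤ D) :
    |∫ y, F y ∂β - ∫ y, G y ∂β| ≤ D := by
  have hFi : Integrable F β := by
    refine Integrable.mono' (integrable_const 1) hF.aestronglyMeasurable ?_
    exact ae_of_all _ fun y => by rw [Real.norm_eq_abs]; exact hF1 y
  have hGi : Integrable G β := by
    refine Integrable.mono' (integrable_const 1) hG.aestronglyMeasurable ?_
    exact ae_of_all _ fun y => by rw [Real.norm_eq_abs]; exact hG1 y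
  rw [← integral_sub hFi hGi, ← Real.norm_eq_abs]
  have := norm_integral_le_of_norm_le_const (μ := β) (f := fun y => F y - G y) (C := D)
    (ae_of_all _ fun y => by rw [Real.norm_eq_abs]; exact h y)
  simpa using this

lemma gscale (σ : ℝ) (r : ℝ) :
    gaussianReal 0 1 {x | σ * x ≤ r} = gaussianReal 0 ⟨σ^2, sq_nonneg σ⟩ (Iic r) := by
  have h1 : Measure.map (σ * ·) (gaussianReal 0 1) = gaussianReal 0 ⟨σ^2, sq_nonneg σ⟩ := by
    rw [gaussianReal_map_const_mul σ, mul_zero, mul_one]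
    rfl
  rw [← h1, Measure.map_apply (measurable_const_mul σ) measurableSet_Iic]
  rfl

lemma grot (σ τ : ℝ) (hστ : σ ≠ 0 ∨ τ ≠ 0) (t : ℝ) :
    ((gaussianReal 0 1).prod (gaussianReal 0 1)) {p : ℝ × ℝ | σ * p.1 + τ * p.2 ≤ t}
      = gaussianReal 0 1 (Iic (t / Real.sqrt (σ^2 + τ^2))) := by
  have hc2 : 0 < σ^2 + τ^2 := by
    rcases hστ with h | h
    · have : 0 < σ^2 := lt_of_le_of_ne (sq_nonneg σ) (Ne.symm (pow_ne_zero 2 h))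
      nlinarith [sq_nonneg τ]
    · have : 0 < τ^2 := lt_of_le_of_ne (sq_nonneg τ) (Ne.symm (pow_ne_zero 2 h))
      nlinarith [sq_nonneg σ]
  set c : ℝ := Real.sqrt (σ^2 + τ^2) with hcdef
  have hc : 0 < c := Real.sqrt_pos.2 hc2
  have hfinal : gaussianReal 0 (⟨σ^2, sq_nonneg σ⟩ + ⟨τ^2, sq_nonneg τ⟩) (Iic t)
      = gaussianReal 0 1 (Iic (t / c)) := by
    have h1 : Measure.map (c * ·) (gaussianReal 0 1)
        = gaussianReal 0 (⟨σ^2, sq_nonneg σ⟩ + ⟨τ^2, sq_nonneg τ⟩) := by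
      rw [gaussianReal_map_const_mul c, mul_zero, mul_one]
      congr 1
      ext
      push_cast
      rw [hcdef, Real.sq_sqrt hc2.le]
      rfl
    rw [← h1, Measure.map_apply (measurable_const_mul c) measurableSet_Iic]
    congr 1
    ext x
    simp only [mem_preimage, mem_Iic]
    rw [le_div_iff₀ hc, mul_comm]
  by_cases hσ : σ = 0
  · subst hσ
    have hset : {p : ℝ × ℝ | 0 * p.1 + τ * p.2 ≤ t} = univ ×ˢ {y | τ * y ≤ t} := by
      ext p; simp
    rw [hset, Measure.prod_prod, measure_univ, one_mul, gscale τ]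
    rw [show (⟨(0:ℝ)^2, sq_nonneg 0⟩ + ⟨τ^2, sq_nonneg τ⟩ : ℝ≥0) = ⟨τ^2, sq_nonneg τ⟩ by
      ext; show (0:ℝ)^2 + τ^2 = τ^2; ring] at hfinal
    exact hfinal
  by_cases hτ : τ = 0
  · subst hτ
    have hset : {p : ℝ × ℝ | σ * p.1 + 0 * p.2 ≤ t} = {x | σ * x ≤ t} ×ˢ univ := by
      ext p; simp
    rw [hset, Measure.prod_prod, measure_univ, mul_one, gscale σ]
    rw [show (⟨σ^2, sq_nonneg σ⟩ + ⟨(0:ℝ)^2, sq_nonneg 0⟩ : ℝ≥0) = ⟨σ^2, sq_nonneg σ⟩ by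
      ext; show σ^2 + (0:ℝ)^2 = σ^2; ring] at hfinal
    exact hfinal
  · rw [Measure.prod_apply (Smeas σ τ t)]
    have hset : ∀ x : ℝ, (Prod.mk x ⁻¹' {p : ℝ × ℝ | σ * p.1 + τ * p.2 ≤ t})
        = {y | τ * y ≤ t - σ * x} := by
      intro x; ext y; simp only [mem_preimage, mem_setOf_eq]; constructor <;> intro h <;> linarith
    simp_rw [hset, gscale τ]
    have hmap : Measure.map (σ * ·) (gaussianReal 0 1) = gaussianReal 0 ⟨σ^2, sq_nonneg σ⟩ := by
      rw [gaussianReal_map_const_mul σ, mul_zero, mul_one]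
      rfl
    have hswap : ∫⁻ x, gaussianReal 0 ⟨τ^2, sq_nonneg τ⟩ (Iic (t - σ * x)) ∂(gaussianReal 0 1)
        = ∫⁻ w, gaussianReal 0 ⟨τ^2, sq_nonneg τ⟩ (Iic (t - w))
            ∂(gaussianReal 0 ⟨σ^2, sq_nonneg σ⟩) := by
      have hcdf : Measurable (fun w : ℝ => gaussianReal 0 ⟨τ^2, sq_nonneg τ⟩ (Iic (t - w))) :=
        (measurable_gauss_cdf _).comp (measurable_const.sub measurable_id)
      rw [← hmap, lintegral_map hcdf (measurable_const_mul σ)]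
    rw [hswap, gauss_conv_Iic ⟨σ^2, sq_nonneg σ⟩ ⟨τ^2, sq_nonneg τ⟩ (fun h => hσ (by
      have := congrArg (NNReal.toReal) h
      exact (pow_eq_zero_iff (a := σ) (n := 2) two_ne_zero).1 this)) (fun h => hτ (by
      have := congrArg (NNReal.toReal) h
      exact (pow_eq_zero_iff (a := τ) (n := 2) two_ne_zero).1 this)) t, hfinal]

/-- For independent `X, Y` and reals `σ, τ` not both zero,
`d_KS((σX + τY)/√(σ²+τ²), N) ≤ d_KS(X, N) + d_KS(Y, N)` where `N` is standard Gaussian. -/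
theorem dKSN_combination_le {Ω : Type*} [MeasureSpace Ω]
    [IsProbabilityMeasure (ℙ : Measure Ω)]
    (X Y : Ω → ℝ) (hX : Measurable X) (hY : Measurable Y)
    (hindep : IndepFun X Y ℙ) (σ τ : ℝ) (hστ : σ ≠ 0 ∨ τ ≠ 0) :
    dKSN (fun ω => (σ * X ω + τ * Y ω) / Real.sqrt (σ ^ 2 + τ ^ 2))
      ≤ dKSN X + dKSN Y := by
  have hc2 : 0 < σ^2 + τ^2 := by
    rcases hστ with h | h
    · have : 0 < σ^2 := lt_of_le_of_ne (sq_nonneg σ) (Ne.symm (pow_ne_zero 2 h))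
      nlinarith [sq_nonneg τ]
    · have : 0 < τ^2 := lt_of_le_of_ne (sq_nonneg τ) (Ne.symm (pow_ne_zero 2 h))
      nlinarith [sq_nonneg σ]
  have hc : 0 < Real.sqrt (σ^2 + τ^2) := Real.sqrt_pos.2 hc2
  set γ := gaussianReal 0 1 with hγ
  set μX := Measure.map X ℙ with hμX
  set μY := Measure.map Y ℙ with hμY
  haveI : IsProbabilityMeasure μX := Measure.isProbabilityMeasure_map hX.aemeasurable
  haveI : IsProbabilityMeasure μY := Measure.isProbabilityMeasure_map hY.aemeasurable
  have hmap : Measure.map (fun ω => (X ω, Y ω)) ℙ = μX.prod μY :=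
    (indepFun_iff_map_prod_eq_prod_map_map hX.aemeasurable hY.aemeasurable).1 hindep
  -- identify Kd with dKSN
  have hKX : Kd μX = dKSN X := by
    unfold Kd dKSN
    congr 1
    ext s
    rw [hμX, Measure.map_apply hX measurableSet_Iic]
    rfl
  have hKY : Kd μY = dKSN Y := by
    unfold Kd dKSN
    congr 1
    ext s
    rw [hμY, Measure.map_apply hY measurableSet_Iic]
    rfl
  rw [← hKX, ← hKY]
  unfold dKSN
  apply ciSup_le
  intro s
  set t : ℝ := Real.sqrt (σ^2 + τ^2) * s with ht
  have hZ : ℙ {ω | (σ * X ω + τ * Y ω) / Real.sqrt (σ ^ 2 + τ ^ 2) ≤ s}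
      = (μX.prod μY) {p : ℝ × ℝ | σ * p.1 + τ * p.2 ≤ t} := by
    have hpre : {ω | (σ * X ω + τ * Y ω) / Real.sqrt (σ ^ 2 + τ ^ 2) ≤ s}
        = (fun ω => (X ω, Y ω)) ⁻¹' {p : ℝ × ℝ | σ * p.1 + τ * p.2 ≤ t} := by
      ext ω
      simp only [mem_setOf_eq, mem_preimage, ht]
      rw [div_le_iff₀ hc, mul_comm s]
    rw [hpre, ← hmap, ← Measure.map_apply (hX.prodMk hY) (Smeas σ τ t)]
  have hg : γ (Iic s) = (γ.prod γ) {p : ℝ × ℝ | σ * p.1 + τ * p.2 ≤ t} := by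
    rw [grot σ τ hστ t]
    congr 1
    rw [ht, mul_comm, mul_div_assoc, div_self hc.ne', mul_one]
  have habs : ∀ (ν : Measure ℝ) [IsProbabilityMeasure ν], ∀ ρ u : ℝ,
      |(ν {x | ρ * x ≤ u}).toReal| ≤ 1 := by
    intro ν _ ρ u
    rw [abs_of_nonneg ENNReal.toReal_nonneg]
    exact toReal_le_one ν _
  have h1 : |((μX.prod μY) {p : ℝ × ℝ | σ * p.1 + τ * p.2 ≤ t}).toReal
      - ((γ.prod μY) {p : ℝ × ℝ | σ * p.1 + τ * p.2 ≤ t}).toReal| ≤ Kd μX := by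
    rw [prod_toReal_snd μX μY σ τ t, prod_toReal_snd γ μY σ τ t]
    refine integral_compare μY _ _
      ((slice_meas μX σ).ennreal_toReal.comp (measurable_const.sub (measurable_id.const_mul τ)))
      ((slice_meas γ σ).ennreal_toReal.comp (measurable_const.sub (measurable_id.const_mul τ)))
      (fun y => habs μX σ _) (fun y => habs γ σ _) (Kd μX)
      (fun y => scaled_le_Kd μX σ (t - τ * y))
  have h2 : |((γ.prod μY) {p : ℝ × ℝ | σ * p.1 + τ * p.2 ≤ t}).toReal
      - ((γ.prod γ) {p : ℝ × ℝ | σ * p.1 + τ * p.2 ≤ t}).toReal| ≤ Kd μY := by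
    rw [prod_toReal_fst γ μY σ τ t, prod_toReal_fst γ γ σ τ t]
    refine integral_compare γ _ _
      ((slice_meas μY τ).ennreal_toReal.comp (measurable_const.sub (measurable_id.const_mul σ)))
      ((slice_meas γ τ).ennreal_toReal.comp (measurable_const.sub (measurable_id.const_mul σ)))
      (fun y => habs μY τ _) (fun y => habs γ τ _) (Kd μY)
      (fun y => scaled_le_Kd μY τ (t - σ * y))
  calc |(ℙ {ω | (σ * X ω + τ * Y ω) / Real.sqrt (σ ^ 2 + τ ^ 2) ≤ s}).toReal
        - (γ (Iic s)).toReal|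
      = |((μX.prod μY) {p : ℝ × ℝ | σ * p.1 + τ * p.2 ≤ t}).toReal
        - ((γ.prod γ) {p : ℝ × ℝ | σ * p.1 + τ * p.2 ≤ t}).toReal| := by rw [hZ, hg]
    _ ≤ |((μX.prod μY) {p : ℝ × ℝ | σ * p.1 + τ * p.2 ≤ t}).toReal
        - ((γ.prod μY) {p : ℝ × ℝ | σ * p.1 + τ * p.2 ≤ t}).toReal|
        + |((γ.prod μY) {p : ℝ × ℝ | σ * p.1 + τ * p.2 ≤ t}).toReal
        - ((γ.prod γ) {p : ℝ × ℝ | σ * p.1 + τ * p.2 ≤ t}).toReal| := abs_sub_le _ _ _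
    _ ≤ Kd μX + Kd μY := add_le_add h1 h2
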